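/- Let α, β be weak endomorphisms of the cycle graph C_n. Then ker(α) = ker(β) if and only if α = βσ for some σ in the dihedral group D_{2n} of automorphisms of C_n. -/

import Mathlib

/-- `α` is a weak endomorphism of the cycle graph `C_n` on `ZMod n`. -/
def IsWeakEndCycle (n : ℕ) (α : ZMod n → ZMod n) : Prop :=
  ∀ i : ZMod n, α (i + 1) - α i ∈ ({0, 1, -1} : Set (ZMod n))

/-- The dihedral group `D_{2n}` of automorphisms of `C_n`, generated by the rotation
`i ↦ i + 1` and the reflection `i ↦ 1 - i` (i.e. `i ↦ n - i + 1` mod `n`). -/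
def dihedralCycle (n : ℕ) : Subgroup (Equiv.Perm (ZMod n)) :=
  Subgroup.closure {Equiv.addRight (1 : ZMod n), Equiv.subLeft (1 : ZMod n)}

lemma addRight_one_pow (n m : ℕ) :
    (Equiv.addRight (1 : ZMod n)) ^ m = Equiv.addRight (m : ZMod n) := by
  induction m with
  | zero => ext x; simp
  | succ m ih =>
    rw [pow_succ, ih]
    ext x
    simp [Equiv.Perm.mul_apply]
    ring

lemma addRight_mem_dihedral (n : ℕ) [NeZero n] (c : ZMod n) :
    Equiv.addRight c ∈ dihedralCycle n := by
  have hc : ((c.val : ℕ) : ZMod n) = c := ZMod.natCast_rightInverse c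
  rw [← hc, ← addRight_one_pow]
  exact pow_mem (Subgroup.subset_closure (by simp)) _

lemma subLeft_mem_dihedral (n : ℕ) [NeZero n] (c : ZMod n) :
    Equiv.subLeft c ∈ dihedralCycle n := by
  have hEq : Equiv.subLeft c = Equiv.addRight (c - 1) * Equiv.subLeft 1 := by
    ext x; simp [Equiv.Perm.mul_apply]
  rw [hEq]
  exact mul_mem (addRight_mem_dihedral n _) (Subgroup.subset_closure (by simp))

lemma affine_of_ker_eq {n : ℕ} (hn : 3 ≤ n) {α β : ZMod n → ZMod n}
    (hα : IsWeakEndCycle n α) (hβ : IsWeakEndCycle n β)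
    (h : ∀ x y : ZMod n, α x = α y ↔ β x = β y) :
    ∃ t c : ZMod n, (t = 1 ∨ t = -1) ∧ ∀ x, α x = t * β x + c := by
  haveI : NeZero n := ⟨by omega⟩
  -- basic distinctness facts
  have h2 : (2 : ZMod n) ≠ 0 := by
    have : ((2 : ℕ) : ZMod n) ≠ 0 := by
      rw [Ne, ZMod.natCast_eq_zero_iff]
      intro hd; have := Nat.le_of_dvd (by norm_num) hd; omega
    simpa using this
  have h1ne : (1 : ZMod n) ≠ -1 := fun hEq => h2 (by linear_combination hEq)
  -- the ℕ-indexed walks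
  set A : ℕ → ZMod n := fun k => α (k : ZMod n) with hA
  set B : ℕ → ZMod n := fun k => β (k : ZMod n) with hB
  set d : ℕ → ZMod n := fun k => B (k + 1) - B k with hd
  set e : ℕ → ZMod n := fun k => A (k + 1) - A k with he
  have hdmem : ∀ k, d k = 0 ∨ d k = 1 ∨ d k = -1 := by
    intro k
    have := hβ (k : ZMod n)
    simp only [Set.mem_insert_iff, Set.mem_singleton_iff] at this
    have hc : ((k + 1 : ℕ) : ZMod n) = (k : ZMod n) + 1 := by push_cast; ring
    simpa [hd, hB, hc] using this
  have hemem : ∀ k, e k = 0 ∨ e k = 1 ∨ e k = -1 := by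
    intro k
    have := hα (k : ZMod n)
    simp only [Set.mem_insert_iff, Set.mem_singleton_iff] at this
    have hc : ((k + 1 : ℕ) : ZMod n) = (k : ZMod n) + 1 := by push_cast; ring
    simpa [he, hA, hc] using this
  have hde : ∀ k, d k = 0 ↔ e k = 0 := by
    intro k
    simp only [hd, he, sub_eq_zero, hA, hB]
    exact (h _ _).symm
  -- chain lemma
  have chain : ∀ m : ℕ, ∀ i j : ℕ, i ≤ j → j - i ≤ m → d i ≠ 0 → d j ≠ 0 →
      e i * d i = e j * d j := by
    intro m
    induction m with
    | zero =>
      intro i j hij hm _ _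
      have : i = j := by omega
      subst this; rfl
    | succ m ih =>
      intro i j hij hm hdi hdj
      rcases Nat.eq_or_lt_of_le hij with hEq | hlt
      · subst hEq; rfl
      by_cases hk : ∃ k, i < k ∧ k < j ∧ d k ≠ 0
      · obtain ⟨k, h1, h2', h3⟩ := hk
        calc e i * d i = e k * d k := ih i k h1.le (by omega) hdi h3
        _ = e j * d j := ih k j h2'.le (by omega) h3 hdj
      · push_neg at hk
        -- all steps strictly between are zero
        have hconst : ∀ l, i + 1 ≤ l → l ≤ j → B l = B (i + 1) ∧ A l = A (i + 1) := by
          intro l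
          induction l with
          | zero => intro h1 _; omega
          | succ m' ihm =>
            intro h1 h2'
            rcases Nat.eq_or_lt_of_le h1 with heq | hlt'
            · rw [← heq]; exact ⟨rfl, rfl⟩
            · have hdm : d m' = 0 := hk m' (by omega) (by omega)
              have hem : e m' = 0 := (hde m').mp hdm
              have prev := ihm (by omega) (by omega)
              have hb : B (m' + 1) = B m' := by
                have := sub_eq_zero.mp hdm; exact this
              have ha : A (m' + 1) = A m' := by
                have := sub_eq_zero.mp hem; exact this
              exact ⟨hb.trans prev.1, ha.trans prev.2⟩
        obtain ⟨hbj, haj⟩ := hconst j (by omega) le_rfl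
        have hdi' : d i = 1 ∨ d i = -1 := (hdmem i).resolve_left hdi
        have hdj' : d j = 1 ∨ d j = -1 := (hdmem j).resolve_left hdj
        have hei : e i ≠ 0 := fun hc => hdi ((hde i).mpr hc)
        have hej : e j ≠ 0 := fun hc => hdj ((hde j).mpr hc)
        have hei' : e i = 1 ∨ e i = -1 := (hemem i).resolve_left hei
        have hej' : e j = 1 ∨ e j = -1 := (hemem j).resolve_left hej
        -- rewrite d j, e j using the constancy
        have hdj2 : d j = B (j + 1) - B (i + 1) := by simp only [hd]; rw [hbj]
        have hej2 : e j = A (j + 1) - A (i + 1) := by simp only [he]; rw [haj]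
        have hker : B (j + 1) = B i ↔ A (j + 1) = A i := (h _ _).symm
        by_cases hc : B (j + 1) = B i
        · have hdneg : d j = -(d i) := by
            rw [hdj2, hc, hd]; ring
          have haeq : A (j + 1) = A i := hker.mp hc
          have heneg : e j = -(e i) := by
            rw [hej2, haeq]; simp only [he]; ring
          rw [hdneg, heneg]; ring
        · have hdne : d j ≠ -(d i) := by
            intro hcon
            apply hc
            have : B (j + 1) - B (i + 1) = -(B (i+1) - B i) := by
              rw [← hdj2, hcon]
            have h3 : B (j + 1) = B i := by linear_combination this
            exact h3
          have hdeq : d j = d i := by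
            rcases hdi' with h4 | h4 <;> rcases hdj' with h5 | h5
            · rw [h4, h5]
            · exact (hdne (by rw [h4, h5])).elim
            · exact (hdne (by rw [h4, h5, neg_neg])).elim
            · rw [h4, h5]
          have hane : A (j + 1) ≠ A i := fun hcon => hc (hker.mpr hcon)
          have hene : e j ≠ -(e i) := by
            intro hcon
            apply hane
            have : A (j + 1) - A (i + 1) = -(A (i+1) - A i) := by
              rw [← hej2, hcon]
            linear_combination this
          have heeq : e j = e i := by
            rcases hei' with h4 | h4 <;> rcases hej' with h5 | h5
            · rw [h4, h5]
            · exact (hene (by rw [h4, h5])).elim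
            · exact (hene (by rw [h4, h5, neg_neg])).elim
            · rw [h4, h5]
          rw [hdeq, heeq]
  -- get the sign t
  have hT : ∃ t : ZMod n, (t = 1 ∨ t = -1) ∧ ∀ k, e k = t * d k := by
    by_cases hall : ∀ k : ℕ, d k = 0
    · refine ⟨1, Or.inl rfl, fun k => ?_⟩
      rw [(hde k).mp (hall k), hall k]; ring
    · push_neg at hall
      obtain ⟨k₀, hk₀⟩ := hall
      refine ⟨e k₀ * d k₀, ?_, ?_⟩
      · have h1 : d k₀ = 1 ∨ d k₀ = -1 := (hdmem k₀).resolve_left hk₀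
        have h2' : e k₀ ≠ 0 := fun hc => hk₀ ((hde k₀).mpr hc)
        have h3 : e k₀ = 1 ∨ e k₀ = -1 := (hemem k₀).resolve_left h2'
        rcases h1 with h1 | h1 <;> rcases h3 with h3 | h3 <;> rw [h1, h3] <;> simp
      · intro k
        by_cases hdk : d k = 0
        · rw [(hde k).mp hdk, hdk]; ring
        · have hsq : d k * d k = 1 := by
            rcases (hdmem k).resolve_left hdk with h4 | h4 <;> rw [h4] <;> ring
          have hch : e k₀ * d k₀ = e k * d k := by
            rcases le_total k₀ k with hle | hle
            · exact chain (k - k₀) k₀ k hle le_rfl hk₀ hdk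
            · exact (chain (k₀ - k) k k₀ hle le_rfl hdk hk₀).symm
          calc e k = e k * (d k * d k) := by rw [hsq]; ring
          _ = (e k * d k) * d k := by ring
          _ = (e k₀ * d k₀) * d k := by rw [hch]
  obtain ⟨t, ht, hstep⟩ := hT
  refine ⟨t, A 0 - t * B 0, ht, ?_⟩
  have key : ∀ k : ℕ, A k = t * B k + (A 0 - t * B 0) := by
    intro k
    induction k with
    | zero => ring
    | succ m ihm =>
      have h1 : A (m + 1) = A m + e m := by simp only [he]; ring
      have h2' : B (m + 1) = B m + d m := by simp only [hd]; ring
      rw [h1, h2', ihm, hstep m]; ring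
  intro x
  have hx : ((x.val : ℕ) : ZMod n) = x := ZMod.natCast_rightInverse x
  have hkey := key x.val
  simp only [hA, hB, hx, Nat.cast_zero] at hkey ⊢
  exact hkey

/-- Two weak endomorphisms `α, β` of `C_n` have the same kernel iff `α = β σ`
(apply `β` first, then `σ`) for some `σ` in the dihedral group `D_{2n}`. -/
theorem ker_eq_iff_dihedral_multiple (n : ℕ) (hn : 3 ≤ n) (α β : ZMod n → ZMod n)
    (hα : IsWeakEndCycle n α) (hβ : IsWeakEndCycle n β) :
    (∀ x y : ZMod n, α x = α y ↔ β x = β y) ↔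
      ∃ σ ∈ dihedralCycle n, α = ⇑σ ∘ β := by
  haveI : NeZero n := ⟨by omega⟩
  constructor
  · intro h
    obtain ⟨t, c, ht, habc⟩ := affine_of_ker_eq hn hα hβ h
    rcases ht with ht | ht
    · refine ⟨Equiv.addRight c, addRight_mem_dihedral n c, ?_⟩
      funext x
      simp only [Function.comp_apply, Equiv.coe_addRight]
      rw [habc x, ht]; ring
    · refine ⟨Equiv.subLeft c, subLeft_mem_dihedral n c, ?_⟩
      funext x
      simp only [Function.comp_apply, Equiv.subLeft_apply]
      rw [habc x, ht]; ring
  · rintro ⟨σ, _, rfl⟩ x y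
    simp only [Function.comp_apply, EmbeddingLike.apply_eq_iff_eq]
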